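/- Let q be any prime power and F = GF(q). Let W be the 4-dimensional subspace of quadratic forms over F spanned by X0X1, X0X2−X1^2, X1X2 and X2^2 (the web of conics associated with the line-orbit o_9). Then among the conics of W there is exactly 1 double line, exactly q^2+q pairs of real lines, no pairs of imaginary lines, and exactly q^3 nonsingular conics. -/

import Mathlib

open Matrix

namespace Conics

/-- Coefficient vector (a0,...,a5) of the product of two linear forms
`(b0*X0+b1*X1+b2*X2)*(c0*X0+c1*X1+c2*X2)`, where the quadratic form with
coefficient vector `a` is `a0*X0^2 + a1*X0*X1 + a2*X0*X2 + a3*X1^2 + a4*X1*X2 + a5*X2^2`. -/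
def mulLin {F : Type} [Field F] (b c : Fin 3 → F) : Fin 6 → F :=
  ![b 0 * c 0, b 0 * c 1 + b 1 * c 0, b 0 * c 2 + b 2 * c 0,
    b 1 * c 1, b 1 * c 2 + b 2 * c 1, b 2 * c 2]

/-- The discriminant of the quadratic form with coefficient vector `a`. -/
def disc {F : Type} [Field F] (a : Fin 6 → F) : F :=
  4 * a 0 * a 3 * a 5 + a 1 * a 2 * a 4 - a 0 * a 4 ^ 2 - a 3 * a 2 ^ 2 - a 5 * a 1 ^ 2

/-- `f_a` is a double line: `f_a = c * l^2` for a nonzero scalar `c` and nonzero linear form `l`. -/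
def IsDoubleLine {F : Type} [Field F] (a : Fin 6 → F) : Prop :=
  ∃ (c : F) (l : Fin 3 → F), c ≠ 0 ∧ l ≠ 0 ∧ a = c • mulLin l l

/-- `f_a` is a pair of (distinct) real lines: `f_a = l1 * l2` with neither linear form a scalar
multiple of the other. -/
def IsRealPair {F : Type} [Field F] (a : Fin 6 → F) : Prop :=
  ∃ l1 l2 : Fin 3 → F, (¬ ∃ t : F, l2 = t • l1) ∧ (¬ ∃ t : F, l1 = t • l2) ∧ a = mulLin l1 l2

/-- `f_a` is a pair of conjugate imaginary lines: singular, but not a product of two linear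
forms over `F`. -/
def IsImagPair {F : Type} [Field F] (a : Fin 6 → F) : Prop :=
  disc a = 0 ∧ ¬ ∃ l1 l2 : Fin 3 → F, a = mulLin l1 l2

/-- `f_a` is a nonsingular conic. -/
def IsNonsingular {F : Type} [Field F] (a : Fin 6 → F) : Prop :=
  disc a ≠ 0

/-- The number of conics of a given type `T` in a linear system `W` (a subspace of the space of
quadratic forms, identified with `F^6`): the number of 1-dimensional subspaces `⟨a⟩` of `W`,
`a ≠ 0`, such that `f_a` has type `T`. -/
noncomputable def numConics {F : Type} [Field F] (W : Submodule F (Fin 6 → F))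
    (T : (Fin 6 → F) → Prop) : ℕ :=
  Set.ncard {P : Submodule F (Fin 6 → F) |
    ∃ a : Fin 6 → F, a ≠ 0 ∧ a ∈ W ∧ T a ∧ P = Submodule.span F {a}}

/-- The symmetric 3×3 matrix associated with a point `y` of `PG(5,q)`. -/
def M {F : Type} [Field F] (y : Fin 6 → F) : Matrix (Fin 3) (Fin 3) F :=
  !![y 0, y 1, y 2; y 1, y 3, y 4; y 2, y 4, y 5]

/-- The pairing `B(a,y) = a0*y0 + ... + a5*y5`. -/
def Bform {F : Type} [Field F] (a y : Fin 6 → F) : F :=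
  a 0 * y 0 + a 1 * y 1 + a 2 * y 2 + a 3 * y 3 + a 4 * y 4 + a 5 * y 5

/-- The squab of conics associated with a (nonzero) point `y`: the hyperplane
`{a : B(a,y) = 0}` of the space of quadratic forms. -/
def squab {F : Type} [Field F] (y : Fin 6 → F) : Submodule F (Fin 6 → F) where
  carrier := {a | Bform a y = 0}
  add_mem' := by
    intro a b ha hb
    simp only [Set.mem_setOf_eq, Bform, Pi.add_apply] at *
    linear_combination ha + hb
  zero_mem' := by simp [Bform]
  smul_mem' := by
    intro c a ha
    simp only [Set.mem_setOf_eq, Bform, Pi.smul_apply, smul_eq_mul] at *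
    linear_combination c * ha

/-! ### Auxiliary material for the proof -/

section Aux

variable {F : Type} [Field F]

/-- Canonical vector `(0, p1, p2, -p2, p4, p5)` of the web. -/
def vv (p1 p2 p4 p5 : F) : Fin 6 → F := ![0, p1, p2, -p2, p4, p5]

@[simp] lemma vv0 (p1 p2 p4 p5 : F) : vv p1 p2 p4 p5 0 = 0 := rfl
@[simp] lemma vv1 (p1 p2 p4 p5 : F) : vv p1 p2 p4 p5 1 = p1 := rfl
@[simp] lemma vv2 (p1 p2 p4 p5 : F) : vv p1 p2 p4 p5 2 = p2 := rfl
@[simp] lemma vv3 (p1 p2 p4 p5 : F) : vv p1 p2 p4 p5 3 = -p2 := rfl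
@[simp] lemma vv4 (p1 p2 p4 p5 : F) : vv p1 p2 p4 p5 4 = p4 := rfl
@[simp] lemma vv5 (p1 p2 p4 p5 : F) : vv p1 p2 p4 p5 5 = p5 := rfl

@[simp] lemma cons_val_four6 {α : Type} (a b c d e f : α) :
  (![a, b, c, d, e, f] : Fin 6 → α) 4 = e := rfl
@[simp] lemma cons_val_five6 {α : Type} (a b c d e f : α) :
  (![a, b, c, d, e, f] : Fin 6 → α) 5 = f := rfl

lemma ml0 (b c : Fin 3 → F) : mulLin b c 0 = b 0 * c 0 := rfl
lemma ml1 (b c : Fin 3 → F) : mulLin b c 1 = b 0 * c 1 + b 1 * c 0 := rfl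
lemma ml2 (b c : Fin 3 → F) : mulLin b c 2 = b 0 * c 2 + b 2 * c 0 := rfl
lemma ml3 (b c : Fin 3 → F) : mulLin b c 3 = b 1 * c 1 := rfl
lemma ml4 (b c : Fin 3 → F) : mulLin b c 4 = b 1 * c 2 + b 2 * c 1 := rfl
lemma ml5 (b c : Fin 3 → F) : mulLin b c 5 = b 2 * c 2 := rfl

lemma disc_mulLin (b c : Fin 3 → F) : disc (mulLin b c) = 0 := by
  simp only [disc, ml0, ml1, ml2, ml3, ml4, ml5]; ring

/-- The web as an explicit submodule. -/
def K : Submodule F (Fin 6 → F) where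
  carrier := {a | a 0 = 0 ∧ a 3 = -(a 2)}
  add_mem' := by
    rintro a b ⟨ha0, ha3⟩ ⟨hb0, hb3⟩
    refine ⟨?_, ?_⟩ <;> simp only [Pi.add_apply, ha0, hb0, ha3, hb3] <;> ring
  zero_mem' := by simp
  smul_mem' := by
    rintro c a ⟨ha0, ha3⟩
    refine ⟨?_, ?_⟩ <;>
      simp only [Pi.smul_apply, smul_eq_mul, ha0, ha3] <;> ring

lemma mem_K_iff {a : Fin 6 → F} : a ∈ (K : Submodule F (Fin 6 → F)) ↔ a 0 = 0 ∧ a 3 = -(a 2) :=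
  Iff.rfl

lemma span_gens_eq_K :
    Submodule.span F ({![0, 1, 0, 0, 0, 0], ![0, 0, 1, -1, 0, 0],
      ![0, 0, 0, 0, 1, 0], ![0, 0, 0, 0, 0, 1]} : Set (Fin 6 → F)) = K := by
  apply le_antisymm
  · rw [Submodule.span_le]
    rintro x hx
    simp only [Set.mem_insert_iff, Set.mem_singleton_iff] at hx
    rcases hx with rfl | rfl | rfl | rfl <;>
      exact ⟨by norm_num, by simp⟩
  · rintro a ⟨h0, h3⟩
    have ha : a = a 1 • ![0, 1, 0, 0, 0, 0] + a 2 • ![0, 0, 1, -1, 0, 0]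
        + a 4 • ![0, 0, 0, 0, 1, 0] + a 5 • ![0, 0, 0, 0, 0, 1] := by
      funext i
      fin_cases i <;>
        simp only [Pi.add_apply, Pi.smul_apply, smul_eq_mul] <;>
        simp [h0, h3]
    rw [ha]
    have m1 : (![0, 1, 0, 0, 0, 0] : Fin 6 → F) ∈ ({![0, 1, 0, 0, 0, 0], ![0, 0, 1, -1, 0, 0],
        ![0, 0, 0, 0, 1, 0], ![0, 0, 0, 0, 0, 1]} : Set (Fin 6 → F)) := by simp
    have m2 : (![0, 0, 1, -1, 0, 0] : Fin 6 → F) ∈ ({![0, 1, 0, 0, 0, 0], ![0, 0, 1, -1, 0, 0],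
        ![0, 0, 0, 0, 1, 0], ![0, 0, 0, 0, 0, 1]} : Set (Fin 6 → F)) := by simp
    have m3 : (![0, 0, 0, 0, 1, 0] : Fin 6 → F) ∈ ({![0, 1, 0, 0, 0, 0], ![0, 0, 1, -1, 0, 0],
        ![0, 0, 0, 0, 1, 0], ![0, 0, 0, 0, 0, 1]} : Set (Fin 6 → F)) := by simp
    have m4 : (![0, 0, 0, 0, 0, 1] : Fin 6 → F) ∈ ({![0, 1, 0, 0, 0, 0], ![0, 0, 1, -1, 0, 0],
        ![0, 0, 0, 0, 1, 0], ![0, 0, 0, 0, 0, 1]} : Set (Fin 6 → F)) := by simp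
    exact add_mem (add_mem (add_mem
      (Submodule.smul_mem _ _ (Submodule.subset_span m1))
      (Submodule.smul_mem _ _ (Submodule.subset_span m2)))
      (Submodule.smul_mem _ _ (Submodule.subset_span m3)))
      (Submodule.smul_mem _ _ (Submodule.subset_span m4))

lemma span_eq_of_smul {a b : Fin 6 → F} {c : F} (hc : c ≠ 0) (h : b = c • a) :
    Submodule.span F ({b} : Set (Fin 6 → F)) = Submodule.span F {a} := by
  rw [h]
  exact Submodule.span_singleton_smul_eq hc.isUnit a

lemma exists_smul_of_span_eq {a b : Fin 6 → F}
    (h : Submodule.span F ({a} : Set (Fin 6 → F)) = Submodule.span F {b}) :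
    ∃ c : F, a = c • b := by
  have ha : a ∈ Submodule.span F ({b} : Set (Fin 6 → F)) :=
    h ▸ Submodule.mem_span_singleton_self a
  rw [Submodule.mem_span_singleton] at ha
  obtain ⟨c, hc⟩ := ha
  exact ⟨c, hc.symm⟩

lemma ncard_eq_card {α : Type} [Finite α] (S : Set (Submodule F (Fin 6 → F)))
    (f : α → Submodule F (Fin 6 → F)) (hinj : Function.Injective f)
    (him : Set.range f = S) : S.ncard = Nat.card α := by
  rw [← him, ← Set.image_univ, Set.ncard_image_of_injective _ hinj, Set.ncard_univ]

/-- The discriminant on the web. -/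
lemma disc_on_K {a : Fin 6 → F} (h0 : a 0 = 0) (h3 : a 3 = -(a 2)) :
    disc a = a 1 * a 2 * a 4 + a 2 ^ 3 - a 5 * a 1 ^ 2 := by
  rw [disc, h0, h3]; ring

/-- Any singular member of the web factors into linear forms. -/
lemma factors_of_singular {a : Fin 6 → F} (h0 : a 0 = 0) (h3 : a 3 = -(a 2))
    (hd : disc a = 0) : ∃ l1 l2 : Fin 3 → F, a = mulLin l1 l2 := by
  have hd' : a 1 * a 2 * a 4 + a 2 ^ 3 - a 5 * a 1 ^ 2 = 0 := by
    rw [← disc_on_K h0 h3]; exact hd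
  by_cases hc : a 1 = 0
  · have h2 : a 2 = 0 := by
      have h23 : a 2 ^ 3 = 0 := by rw [hc] at hd'; linear_combination hd'
      exact pow_eq_zero_iff (by norm_num) |>.mp h23
    exact ⟨![0, a 4, a 5], ![0, 0, 1], by
      funext i; fin_cases i <;>
        simp [mulLin, h0, hc, h2, h3]⟩
  · refine ⟨![a 1, -(a 2), a 4 + a 2 ^ 2 / a 1], ![0, 1, a 2 / a 1], ?_⟩
    funext i
    fin_cases i
    · simp [mulLin, h0]
    · simp [mulLin]
    · simp [mulLin]; field_simp
    · simp [mulLin, h3]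
    · simp [mulLin]; field_simp; ring
    · simp [mulLin]; field_simp; linear_combination -hd'

end Aux

section Counts

variable {F : Type} [Field F]

/-- The set counted by `numConics K T`. -/
def lineSet (T : (Fin 6 → F) → Prop) : Set (Submodule F (Fin 6 → F)) :=
  {P : Submodule F (Fin 6 → F) |
    ∃ a : Fin 6 → F, a ≠ 0 ∧ a ∈ (K : Submodule F (Fin 6 → F)) ∧ T a ∧
      P = Submodule.span F {a}}

/- ### Double lines -/

lemma doubleLine_set_eq :
    lineSet (IsDoubleLine (F := F)) = {Submodule.span F ({vv 0 0 0 1} : Set (Fin 6 → F))} := by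
  apply Set.eq_singleton_iff_unique_mem.mpr
  constructor
  · refine ⟨vv 0 0 0 1, ?_, ⟨rfl, by norm_num⟩, ?_, rfl⟩
    · intro h; simpa using congrFun h 5
    · refine ⟨1, ![0, 0, 1], one_ne_zero, ?_, ?_⟩
      · intro h; simpa using congrFun h 2
      · funext i; fin_cases i <;> simp [mulLin, vv]
  · rintro P ⟨a, ha, ⟨h0, h3⟩, ⟨c, l, hc, hl, heq⟩, rfl⟩
    have e0 : c * (l 0 * l 0) = 0 := by
      have := congrFun heq 0; rw [h0] at this
      simpa [ml0] using this.symm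
    have hl0 : l 0 = 0 := by
      rcases mul_eq_zero.mp e0 with h | h
      · exact absurd h hc
      · exact mul_self_eq_zero.mp h
    have e2 : a 2 = 0 := by
      have := congrFun heq 2
      simp only [Pi.smul_apply, smul_eq_mul, ml2, hl0] at this
      simpa using this
    have e3 : c * (l 1 * l 1) = 0 := by
      have := congrFun heq 3
      simp only [Pi.smul_apply, smul_eq_mul, ml3] at this
      rw [h3, e2] at this; simpa using this.symm
    have hl1 : l 1 = 0 := by
      rcases mul_eq_zero.mp e3 with h | h
      · exact absurd h hc
      · exact mul_self_eq_zero.mp h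
    have hl2 : l 2 ≠ 0 := by
      intro h
      exact hl (funext fun i => by fin_cases i <;> simp [hl0, hl1, h])
    have key : a = (c * (l 2 * l 2)) • vv 0 0 0 1 := by
      rw [heq]
      funext i
      fin_cases i <;> simp [mulLin, vv, hl0, hl1] <;> ring
    exact span_eq_of_smul (by simp [hc, hl2]) key

end Counts

section Counts2

variable {F : Type} [Field F]

/- ### Imaginary pairs: none -/

lemma imagPair_set_eq : lineSet (IsImagPair (F := F)) = ∅ := by
  rw [Set.eq_empty_iff_forall_notMem]
  rintro P ⟨a, ha, ⟨h0, h3⟩, ⟨hd, hnf⟩, rfl⟩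
  exact hnf (factors_of_singular h0 h3 hd)

/- ### Real pairs -/

/-- Representatives for the real pairs in the web. -/
noncomputable def rpRep : (F × F) ⊕ F → Submodule F (Fin 6 → F) :=
  Sum.elim
    (fun p => Submodule.span F ({vv 1 p.1 p.2 (p.1 * p.2 + p.1 ^ 3)} : Set (Fin 6 → F)))
    (fun p5 => Submodule.span F ({vv 0 0 1 p5} : Set (Fin 6 → F)))

lemma vv1_ne_zero (p2 p4 p5 : F) : vv 1 p2 p4 p5 ≠ 0 := by
  intro h; simpa using congrFun h 1

lemma vv4_ne_zero (p5 : F) : vv (0 : F) 0 1 p5 ≠ 0 := by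
  intro h; simpa using congrFun h 4

lemma rpRep_injective : Function.Injective (rpRep (F := F)) := by
  rintro (⟨p2, p4⟩ | p5) (⟨q2, q4⟩ | q5) h <;> simp only [rpRep, Sum.elim_inl, Sum.elim_inr] at h
  · obtain ⟨c, hc⟩ := exists_smul_of_span_eq h
    have h1 : (1 : F) = c * 1 := by simpa using congrFun hc 1
    have hc1 : c = 1 := by rw [mul_one] at h1; exact h1.symm
    have e2 : p2 = q2 := by simpa [hc1] using congrFun hc 2
    have e4 : p4 = q4 := by simpa [hc1] using congrFun hc 4
    simp [e2, e4]
  · obtain ⟨c, hc⟩ := exists_smul_of_span_eq h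
    have h1 : (1 : F) = c * 0 := by simpa using congrFun hc 1
    simp at h1
  · obtain ⟨c, hc⟩ := exists_smul_of_span_eq h
    have h1 : (0 : F) = c * 1 := by simpa using congrFun hc 1
    have hc0 : c = 0 := by rw [mul_one] at h1; exact h1.symm
    have h4 : (1 : F) = c * q4 := by simpa using congrFun hc 4
    rw [hc0, zero_mul] at h4
    exact absurd h4.symm zero_ne_one
  · obtain ⟨c, hc⟩ := exists_smul_of_span_eq h
    have h4 : (1 : F) = c * 1 := by simpa using congrFun hc 4
    have hc1 : c = 1 := by rw [mul_one] at h4; exact h4.symm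
    have e5 : p5 = q5 := by simpa [hc1] using congrFun hc 5
    simp [e5]

lemma rpRep_isRealPair1 (p2 p4 : F) : IsRealPair (vv 1 p2 p4 (p2 * p4 + p2 ^ 3)) := by
  refine ⟨![1, -p2, p4 + p2 ^ 2], ![0, 1, p2], ?_, ?_, ?_⟩
  · rintro ⟨t, ht⟩
    have h0 : (0 : F) = t * 1 := by simpa using congrFun ht 0
    have ht0 : t = 0 := by rw [mul_one] at h0; exact h0.symm
    have h1 : (1 : F) = t * (-p2) := by simpa using congrFun ht 1
    rw [ht0, zero_mul] at h1
    exact absurd h1.symm zero_ne_one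
  · rintro ⟨t, ht⟩
    have h0 : (1 : F) = t * 0 := by simpa using congrFun ht 0
    simp at h0
  · funext i; fin_cases i <;> simp [mulLin, vv] <;> ring

lemma rpRep_isRealPair2 (p5 : F) : IsRealPair (vv (0 : F) 0 1 p5) := by
  refine ⟨![0, 1, p5], ![0, 0, 1], ?_, ?_, ?_⟩
  · rintro ⟨t, ht⟩
    have h1 : (0 : F) = t * 1 := by simpa using congrFun ht 1
    have ht0 : t = 0 := by rw [mul_one] at h1; exact h1.symm
    have h2 : (1 : F) = t * p5 := by simpa using congrFun ht 2
    rw [ht0, zero_mul] at h2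
    exact absurd h2.symm zero_ne_one
  · rintro ⟨t, ht⟩
    have h1 : (1 : F) = t * 0 := by simpa using congrFun ht 1
    simp at h1
  · funext i; fin_cases i <;> simp [mulLin, vv]

/-- A nonzero multiple of `X2^2` is not a pair of distinct real lines. -/
lemma not_realPair_e5 {a : Fin 6 → F} (h5 : a 5 ≠ 0) (h0 : a 0 = 0) (h1 : a 1 = 0)
    (h2 : a 2 = 0) (h3 : a 3 = 0) (h4 : a 4 = 0) : ¬ IsRealPair a := by
  rintro ⟨l1, l2, _, hnp2, hfac⟩
  have e0 : l1 0 * l2 0 = 0 := by rw [← h0, hfac]; rfl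
  have e1 : l1 0 * l2 1 + l1 1 * l2 0 = 0 := by rw [← h1, hfac]; rfl
  have e2 : l1 0 * l2 2 + l1 2 * l2 0 = 0 := by rw [← h2, hfac]; rfl
  have e3 : l1 1 * l2 1 = 0 := by rw [← h3, hfac]; rfl
  have e4 : l1 1 * l2 2 + l1 2 * l2 1 = 0 := by rw [← h4, hfac]; rfl
  have e5 : l1 2 * l2 2 = a 5 := by rw [hfac]; rfl
  have hb2 : l1 2 ≠ 0 := fun h => h5 (by rw [← e5, h, zero_mul])
  have hc2 : l2 2 ≠ 0 := fun h => h5 (by rw [← e5, h, mul_zero])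
  have hc0 : l2 0 = 0 := by
    rcases mul_eq_zero.mp e0 with h | h
    · -- l1 0 = 0
      have : l1 2 * l2 0 = 0 := by rw [h] at e2; linear_combination e2
      rcases mul_eq_zero.mp this with h' | h'
      · exact absurd h' hb2
      · exact h'
    · exact h
  have hb0 : l1 0 = 0 := by
    have : l1 0 * l2 2 = 0 := by rw [hc0] at e2; linear_combination e2
    rcases mul_eq_zero.mp this with h | h
    · exact h
    · exact absurd h hc2
  have hc1 : l2 1 = 0 := by
    rcases mul_eq_zero.mp e3 with h | h
    · have : l1 2 * l2 1 = 0 := by rw [h] at e4; linear_combination e4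
      rcases mul_eq_zero.mp this with h' | h'
      · exact absurd h' hb2
      · exact h'
    · exact h
  have hb1 : l1 1 = 0 := by
    have : l1 1 * l2 2 = 0 := by rw [hc1] at e4; linear_combination e4
    rcases mul_eq_zero.mp this with h | h
    · exact h
    · exact absurd h hc2
  exact hnp2 ⟨l1 2 * (l2 2)⁻¹, funext fun i => by
    fin_cases i <;> simp [Pi.smul_apply, hb0, hb1, hc0, hc1] <;> field_simp⟩

lemma realPair_set_eq : Set.range (rpRep (F := F)) = lineSet (IsRealPair (F := F)) := by
  apply le_antisymm
  · rintro P ⟨x, rfl⟩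
    rcases x with ⟨p2, p4⟩ | p5
    · exact ⟨vv 1 p2 p4 (p2 * p4 + p2 ^ 3), vv1_ne_zero _ _ _, ⟨rfl, rfl⟩,
        rpRep_isRealPair1 p2 p4, rfl⟩
    · exact ⟨vv 0 0 1 p5, vv4_ne_zero _, ⟨rfl, rfl⟩, rpRep_isRealPair2 p5, rfl⟩
  · rintro P ⟨a, ha, ⟨h0, h3⟩, hrp, rfl⟩
    have hd : disc a = 0 := by
      obtain ⟨l1, l2, _, _, hfac⟩ := hrp
      rw [hfac]; exact disc_mulLin l1 l2
    have hd' : a 1 * a 2 * a 4 + a 2 ^ 3 - a 5 * a 1 ^ 2 = 0 := by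
      rw [← disc_on_K h0 h3]; exact hd
    by_cases hc : a 1 = 0
    · have h2 : a 2 = 0 := by
        have h23 : a 2 ^ 3 = 0 := by rw [hc] at hd'; linear_combination hd'
        exact pow_eq_zero_iff (by norm_num) |>.mp h23
      by_cases hc4 : a 4 = 0
      · exfalso
        have h5 : a 5 ≠ 0 := by
          intro h5
          exact ha (funext fun i => by
            fin_cases i <;> simp [h0, hc, h2, h3, hc4, h5])
        exact not_realPair_e5 h5 h0 hc h2 (by rw [h3, h2, neg_zero]) hc4 hrp
      · refine ⟨Sum.inr ((a 4)⁻¹ * a 5), ?_⟩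
        simp only [rpRep, Sum.elim_inr]
        refine span_eq_of_smul (c := (a 4)⁻¹) (by simp [hc4]) ?_
        funext i
        fin_cases i
        · simp [vv, h0]
        · simp [vv, hc]
        · simp [vv, h2]
        · simp [vv, h3, h2]
        · simp [vv]; field_simp
        · simp [vv, mul_comm]
    · refine ⟨Sum.inl ((a 1)⁻¹ * a 2, (a 1)⁻¹ * a 4), ?_⟩
      simp only [rpRep, Sum.elim_inl]
      refine span_eq_of_smul (c := (a 1)⁻¹) (by simp [hc]) ?_
      funext i
      fin_cases i
      · simp [vv, h0]
      · simp [vv]; field_simp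
      · simp [vv, mul_comm]
      · simp [vv, h3]; try ring
      · simp [vv, mul_comm]
      · simp [vv]; field_simp; linear_combination hd'

/- ### Nonsingular conics -/

/-- Representatives for the nonsingular conics in the web. -/
noncomputable def nsRep : (F × F × Fˣ) ⊕ (F × F) → Submodule F (Fin 6 → F) :=
  Sum.elim
    (fun p => Submodule.span F
      ({vv 1 p.1 p.2.1 (p.1 * p.2.1 + p.1 ^ 3 + (p.2.2 : F))} : Set (Fin 6 → F)))
    (fun p => Submodule.span F ({vv 0 1 p.1 p.2} : Set (Fin 6 → F)))

lemma vv2_ne_zero (p4 p5 : F) : vv (0 : F) 1 p4 p5 ≠ 0 := by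
  intro h; simpa using congrFun h 2

lemma nsRep_injective : Function.Injective (nsRep (F := F)) := by
  rintro (⟨p2, p4, u⟩ | ⟨p4, p5⟩) (⟨q2, q4, w⟩ | ⟨q4, q5⟩) h <;>
    simp only [nsRep, Sum.elim_inl, Sum.elim_inr] at h
  · obtain ⟨c, hc⟩ := exists_smul_of_span_eq h
    have h1 : (1 : F) = c * 1 := by simpa using congrFun hc 1
    have hc1 : c = 1 := by rw [mul_one] at h1; exact h1.symm
    have e2 : p2 = q2 := by simpa [hc1] using congrFun hc 2
    have e4 : p4 = q4 := by simpa [hc1] using congrFun hc 4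
    have e5 : p2 * p4 + p2 ^ 3 + (u : F) = q2 * q4 + q2 ^ 3 + (w : F) := by
      simpa [hc1] using congrFun hc 5
    rw [e2, e4] at e5
    have eu : (u : F) = (w : F) := by linear_combination e5
    have : u = w := Units.ext eu
    simp [e2, e4, this]
  · obtain ⟨c, hc⟩ := exists_smul_of_span_eq h
    have h1 : (1 : F) = c * 0 := by simpa using congrFun hc 1
    simp at h1
  · obtain ⟨c, hc⟩ := exists_smul_of_span_eq h
    have h1 : (0 : F) = c * 1 := by simpa using congrFun hc 1
    have hc0 : c = 0 := by rw [mul_one] at h1; exact h1.symm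
    have h2 : (1 : F) = c * q2 := by simpa using congrFun hc 2
    rw [hc0, zero_mul] at h2
    exact absurd h2.symm zero_ne_one
  · obtain ⟨c, hc⟩ := exists_smul_of_span_eq h
    have h2 : (1 : F) = c * 1 := by simpa using congrFun hc 2
    have hc1 : c = 1 := by rw [mul_one] at h2; exact h2.symm
    have e4 : p4 = q4 := by simpa [hc1] using congrFun hc 4
    have e5 : p5 = q5 := by simpa [hc1] using congrFun hc 5
    simp [e4, e5]

lemma nsRep_nonsingular1 (p2 p4 : F) (u : Fˣ) :
    IsNonsingular (vv 1 p2 p4 (p2 * p4 + p2 ^ 3 + (u : F))) := by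
  have : disc (vv 1 p2 p4 (p2 * p4 + p2 ^ 3 + (u : F))) = -(u : F) := by
    rw [disc_on_K (by simp) (by simp)]; simp; try ring
  rw [IsNonsingular, this]
  simpa using u.ne_zero

lemma nsRep_nonsingular2 (p4 p5 : F) : IsNonsingular (vv (0 : F) 1 p4 p5) := by
  have : disc (vv (0 : F) 1 p4 p5) = 1 := by
    rw [disc_on_K (by simp) (by simp)]; simp
  rw [IsNonsingular, this]
  exact one_ne_zero

lemma nonsingular_set_eq :
    Set.range (nsRep (F := F)) = lineSet (IsNonsingular (F := F)) := by
  apply le_antisymm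
  · rintro P ⟨x, rfl⟩
    rcases x with ⟨p2, p4, u⟩ | ⟨p4, p5⟩
    · exact ⟨vv 1 p2 p4 (p2 * p4 + p2 ^ 3 + (u : F)), vv1_ne_zero _ _ _, ⟨rfl, rfl⟩,
        nsRep_nonsingular1 p2 p4 u, rfl⟩
    · exact ⟨vv 0 1 p4 p5, vv2_ne_zero _ _, ⟨rfl, rfl⟩, nsRep_nonsingular2 p4 p5, rfl⟩
  · rintro P ⟨a, ha, ⟨h0, h3⟩, hns, rfl⟩
    have hd' : disc a = a 1 * a 2 * a 4 + a 2 ^ 3 - a 5 * a 1 ^ 2 := disc_on_K h0 h3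
    by_cases hc : a 1 = 0
    · have h2 : a 2 ≠ 0 := by
        intro h2
        apply hns
        rw [hd', hc, h2]; ring
      refine ⟨Sum.inr ((a 2)⁻¹ * a 4, (a 2)⁻¹ * a 5), ?_⟩
      simp only [nsRep, Sum.elim_inr]
      refine span_eq_of_smul (c := (a 2)⁻¹) (by simp [h2]) ?_
      funext i
      fin_cases i
      · simp [vv, h0]
      · simp [vv, hc]
      · simp [vv]; field_simp
      · simp [vv, h3]; field_simp
      · simp [vv, mul_comm]
      · simp [vv, mul_comm]
    · set x : F := -((a 1)⁻¹ ^ 3 * disc a) with hx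
      have hxne : x ≠ 0 := by
        simp only [hx, neg_ne_zero, mul_ne_zero_iff]
        exact ⟨pow_ne_zero _ (inv_ne_zero hc), hns⟩
      refine ⟨Sum.inl ((a 1)⁻¹ * a 2, (a 1)⁻¹ * a 4, Units.mk0 x hxne), ?_⟩
      simp only [nsRep, Sum.elim_inl, Units.val_mk0]
      refine span_eq_of_smul (c := (a 1)⁻¹) (by simp [hc]) ?_
      funext i
      fin_cases i
      · simp [vv, h0]
      · simp [vv]; field_simp
      · simp [vv, mul_comm]
      · simp [vv, h3]; try ring
      · simp [vv, mul_comm]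
      · change vv _ _ _ _ 5 = (a 1)⁻¹ * a 5
        simp only [vv, cons_val_five6, hx, hd']
        field_simp
        ring

end Counts2

/-- conic counts of the web `(X0X1, X0X2 - X1^2, X1X2, X2^2)`
(line-orbit `o_9`). -/
theorem web_o9_conic_counts (F : Type) [Field F] [Fintype F] (q : ℕ)
    (hq : Fintype.card F = q) (W : Submodule F (Fin 6 → F))
    (hW : W = Submodule.span F ({![0, 1, 0, 0, 0, 0], ![0, 0, 1, -1, 0, 0],
      ![0, 0, 0, 0, 1, 0], ![0, 0, 0, 0, 0, 1]} : Set (Fin 6 → F))) :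
    numConics W IsDoubleLine = 1 ∧
    numConics W IsRealPair = q ^ 2 + q ∧
    numConics W IsImagPair = 0 ∧
    numConics W IsNonsingular = q ^ 3 := by
  have hWK : W = (K : Submodule F (Fin 6 → F)) := by rw [hW, span_gens_eq_K]
  subst hWK
  have hq1 : 1 ≤ q := hq ▸ Fintype.card_pos
  have hcard : Nat.card F = q := by rw [Nat.card_eq_fintype_card, hq]
  have hnum : ∀ T : (Fin 6 → F) → Prop,
      numConics (K : Submodule F (Fin 6 → F)) T = (lineSet T).ncard := fun T => rfl
  refine ⟨?_, ?_, ?_, ?_⟩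
  · rw [hnum, doubleLine_set_eq, Set.ncard_singleton]
  · rw [hnum, ← realPair_set_eq,
      ncard_eq_card _ _ rpRep_injective rfl]
    simp only [Nat.card_sum, Nat.card_prod, hcard]
    ring
  · rw [hnum, imagPair_set_eq, Set.ncard_empty]
  · rw [hnum, ← nonsingular_set_eq,
      ncard_eq_card _ _ nsRep_injective rfl]
    have hu : Nat.card Fˣ = q - 1 := by rw [Nat.card_units, hcard]
    simp only [Nat.card_sum, Nat.card_prod, hu, hcard]
    obtain ⟨r, rfl⟩ : ∃ r, q = r + 1 := ⟨q - 1, by omega⟩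
    simp only [Nat.add_sub_cancel]
    ring

end Conics
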